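/- For every r > 0 and every v ∈ L²((−r,r)) one has ‖v‖_{L^{4/3}((−r,r))} ≤ 4·‖v‖_{L²((−r,r))}^{6/7}·I_r(v)^{3/28}, where I_r(v) := ∫_{−r}^{r} (r−|x|)₊² |v(x)|^{4/3} dx. -/

import Mathlib

open MeasureTheory Set

noncomputable section

/-- Inequality (2.6): for every `r > 0` and `v ∈ L²((-r,r))`,
`‖v‖_{4/3} ≤ 4 ‖v‖₂^{6/7} I_r(v)^{3/28}` where
`I_r(v) = ∫_{-r}^{r} (r-|x|)₊² |v|^{4/3} dx`. -/
theorem interpolation_L43 (r : ℝ) (hr : 0 < r) (v : ℝ → ℝ)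
    (hv : MemLp v 2 (volume.restrict (Ioo (-r) r))) :
    (∫ x in Ioo (-r) r, |v x| ^ ((4:ℝ) / 3)) ^ ((3:ℝ) / 4) ≤
      4 * ((∫ x in Ioo (-r) r, (v x) ^ 2) ^ ((1:ℝ) / 2)) ^ ((6:ℝ) / 7) *
        (∫ x in Ioo (-r) r, max (r - |x|) 0 ^ 2 * |v x| ^ ((4:ℝ) / 3)) ^ ((3:ℝ) / 28) := by
  set μ := volume.restrict (Ioo (-r) r) with hμdef
  haveI hμfin : IsFiniteMeasure μ := by
    constructor
    rw [hμdef, Measure.restrict_apply_univ, Real.volume_Ioo]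
    exact ENNReal.ofReal_lt_top
  set A := ∫ x, |v x| ^ ((4:ℝ) / 3) ∂μ with hAdef
  set B := ∫ x, (v x) ^ 2 ∂μ with hBdef
  set I := ∫ x, max (r - |x|) 0 ^ 2 * |v x| ^ ((4:ℝ) / 3) ∂μ with hIdef
  have hA0 : 0 ≤ A := integral_nonneg fun x => Real.rpow_nonneg (abs_nonneg _) _
  have hB0 : 0 ≤ B := integral_nonneg fun x => sq_nonneg _
  have hI0 : 0 ≤ I := integral_nonneg fun x =>
    mul_nonneg (sq_nonneg _) (Real.rpow_nonneg (abs_nonneg _) _)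
  have hint2 : Integrable (fun x => (v x) ^ 2) μ := hv.integrable_sq
  have h43 : MemLp (fun x => |v x| ^ ((4:ℝ) / 3)) (ENNReal.ofReal (3 / 2)) μ := by
    have h := hv.norm_rpow_div (ENNReal.ofReal (4 / 3))
    have he : (2 : ENNReal) / ENNReal.ofReal (4 / 3) = ENNReal.ofReal (3 / 2) := by
      rw [← ENNReal.ofReal_ofNat 2, ← ENNReal.ofReal_div_of_pos (by norm_num)]
      norm_num
    rw [he, ENNReal.toReal_ofReal (by norm_num)] at h
    simpa [Real.norm_eq_abs] using h
  have hint43 : Integrable (fun x => |v x| ^ ((4:ℝ) / 3)) μ := by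
    rw [← memLp_one_iff_integrable]
    exact h43.mono_exponent (by
      rw [← ENNReal.ofReal_one]
      exact ENNReal.ofReal_le_ofReal (by norm_num))
  have hintI : Integrable (fun x => max (r - |x|) 0 ^ 2 * |v x| ^ ((4:ℝ) / 3)) μ := by
    refine hint43.bdd_mul (c := r ^ 2) ?_ (Filter.Eventually.of_forall fun x => ?_)
    · exact (((continuous_const.sub continuous_abs).max continuous_const).pow 2).aestronglyMeasurable
    · have h1 : max (r - |x|) 0 ≤ r := by
        apply max_le _ hr.le
        have := abs_nonneg x
        linarith
      have h0 : (0:ℝ) ≤ max (r - |x|) 0 := le_max_right _ _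
      rw [Real.norm_eq_abs, abs_of_nonneg (pow_nonneg h0 2)]
      exact pow_le_pow_left₀ h0 h1 2
  -- key estimate
  have key : ∀ δ : ℝ, 0 < δ →
      A ≤ B ^ ((2:ℝ) / 3) * (2 * δ) ^ ((1:ℝ) / 3) + (δ ^ 2)⁻¹ * I := by
    intro δ hδ
    set S : Set ℝ := Ioo (-r) (δ - r) ∪ Ioo (r - δ) r with hSdef
    have hSmeas : MeasurableSet S := measurableSet_Ioo.union measurableSet_Ioo
    have hpt : ∀ᵐ x ∂μ, |v x| ^ ((4:ℝ) / 3) ≤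
        S.indicator (fun x => |v x| ^ ((4:ℝ) / 3)) x
          + (δ ^ 2)⁻¹ * (max (r - |x|) 0 ^ 2 * |v x| ^ ((4:ℝ) / 3)) := by
      rw [hμdef]
      filter_upwards [ae_restrict_mem measurableSet_Ioo] with x hx
      by_cases hxS : x ∈ S
      · rw [Set.indicator_of_mem hxS]
        have h2 : 0 ≤ (δ ^ 2)⁻¹ * (max (r - |x|) 0 ^ 2 * |v x| ^ ((4:ℝ) / 3)) := by
          have := Real.rpow_nonneg (abs_nonneg (v x)) ((4:ℝ) / 3)
          positivity
        linarith
      · rw [Set.indicator_of_notMem hxS, zero_add]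
        obtain ⟨hx1, hx2⟩ := hx
        have hx3 : δ ≤ r - |x| := by
          simp only [hSdef, Set.mem_union, Set.mem_Ioo, not_or, not_and_or, not_lt] at hxS
          rcases le_or_gt 0 x with h0 | h0
          · rw [abs_of_nonneg h0]
            rcases hxS.2 with h | h
            · linarith
            · linarith
          · rw [abs_of_neg h0]
            rcases hxS.1 with h | h
            · linarith
            · linarith
        have hmax : max (r - |x|) 0 = r - |x| := max_eq_left (by linarith)
        rw [hmax]
        have h1 : δ ^ 2 ≤ (r - |x|) ^ 2 := by nlinarith
        have h2 : (1:ℝ) ≤ (δ ^ 2)⁻¹ * (r - |x|) ^ 2 := by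
          rw [inv_mul_eq_div, le_div_iff₀ (by positivity)]
          linarith
        calc |v x| ^ ((4:ℝ) / 3) = 1 * |v x| ^ ((4:ℝ) / 3) := (one_mul _).symm
          _ ≤ ((δ ^ 2)⁻¹ * (r - |x|) ^ 2) * |v x| ^ ((4:ℝ) / 3) :=
              mul_le_mul_of_nonneg_right h2 (Real.rpow_nonneg (abs_nonneg _) _)
          _ = (δ ^ 2)⁻¹ * ((r - |x|) ^ 2 * |v x| ^ ((4:ℝ) / 3)) := by ring
    have step1 : A ≤ (∫ x in S, |v x| ^ ((4:ℝ) / 3) ∂μ) + (δ ^ 2)⁻¹ * I := by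
      rw [hAdef, hIdef, ← integral_indicator hSmeas, ← integral_const_mul _ _]
      rw [← integral_add (hint43.indicator hSmeas) (hintI.const_mul _)]
      exact integral_mono_ae hint43 ((hint43.indicator hSmeas).add (hintI.const_mul _)) hpt
    have holder : (∫ x in S, |v x| ^ ((4:ℝ) / 3) ∂μ)
        ≤ B ^ ((2:ℝ) / 3) * (2 * δ) ^ ((1:ℝ) / 3) := by
      have hpq : Real.HolderConjugate (3 / 2) 3 := Real.holderConjugate_iff.mpr ⟨by norm_num, by norm_num⟩
      have hf1 : MemLp (fun x => |v x| ^ ((4:ℝ) / 3)) (ENNReal.ofReal (3 / 2))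
          (μ.restrict S) := h43.restrict S
      have hg1 : MemLp (fun _ : ℝ => (1:ℝ)) (ENNReal.ofReal 3) (μ.restrict S) :=
        memLp_const 1
      have H := integral_mul_le_Lp_mul_Lq_of_nonneg hpq
        (Filter.Eventually.of_forall fun x => Real.rpow_nonneg (abs_nonneg _) _)
        (Filter.Eventually.of_forall fun _ => zero_le_one) hf1 hg1
      simp only [mul_one, Real.one_rpow] at H
      have hfg : ∀ x : ℝ, (|v x| ^ ((4:ℝ) / 3)) ^ ((3:ℝ) / 2) = v x ^ 2 := by
        intro x
        rw [← Real.rpow_mul (abs_nonneg _),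
          show ((4:ℝ) / 3 * (3 / 2)) = ((2:ℕ):ℝ) by norm_num, Real.rpow_natCast, sq_abs]
      have h1 : (∫ x in S, (|v x| ^ ((4:ℝ) / 3)) ^ ((3:ℝ) / 2) ∂μ) ≤ B := by
        have heq : (∫ x in S, (|v x| ^ ((4:ℝ) / 3)) ^ ((3:ℝ) / 2) ∂μ)
            = ∫ x in S, v x ^ 2 ∂μ := by
          apply integral_congr_ae
          exact Filter.Eventually.of_forall fun x => hfg x
        rw [heq]
        exact setIntegral_le_integral hint2 (Filter.Eventually.of_forall fun x => sq_nonneg _)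
      have h2 : (∫ _ in S, (1:ℝ) ∂μ) ≤ 2 * δ := by
        rw [integral_const, smul_eq_mul, mul_one, measureReal_def, Measure.restrict_apply_univ]
        have hle : μ S ≤ ENNReal.ofReal (2 * δ) := by
          rw [hμdef, Measure.restrict_apply' measurableSet_Ioo]
          calc volume (S ∩ Ioo (-r) r) ≤ volume S := measure_mono inter_subset_left
            _ ≤ volume (Ioo (-r) (δ - r)) + volume (Ioo (r - δ) r) := measure_union_le _ _
            _ ≤ ENNReal.ofReal (2 * δ) := by
                rw [Real.volume_Ioo, Real.volume_Ioo,
                  ← ENNReal.ofReal_add (by linarith) (by linarith)]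
                apply ENNReal.ofReal_le_ofReal
                ring_nf
                linarith
        exact ENNReal.toReal_le_of_le_ofReal (by positivity) hle
      calc (∫ x in S, |v x| ^ ((4:ℝ) / 3) ∂μ)
          ≤ (∫ x in S, (|v x| ^ ((4:ℝ) / 3)) ^ ((3:ℝ) / 2) ∂μ) ^ (1 / (3 / 2 : ℝ))
              * (∫ _ in S, (1:ℝ) ∂μ) ^ (1 / (3:ℝ)) := H
        _ ≤ B ^ ((2:ℝ) / 3) * (2 * δ) ^ ((1:ℝ) / 3) := by
            have hn1 : (0:ℝ) ≤ ∫ x in S, (|v x| ^ ((4:ℝ) / 3)) ^ ((3:ℝ) / 2) ∂μ :=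
              integral_nonneg fun x => Real.rpow_nonneg (Real.rpow_nonneg (abs_nonneg _) _) _
            have hn2 : (0:ℝ) ≤ ∫ _ in S, (1:ℝ) ∂μ := integral_nonneg fun _ => zero_le_one
            have e1 : (1 / (3 / 2 : ℝ)) = (2:ℝ) / 3 := by norm_num
            have e2 : (1 / (3:ℝ)) = (1:ℝ) / 3 := by norm_num
            rw [e1, e2]
            exact mul_le_mul (Real.rpow_le_rpow hn1 h1 (by norm_num))
              (Real.rpow_le_rpow hn2 h2 (by norm_num))
              (Real.rpow_nonneg hn2 _) (Real.rpow_nonneg hB0 _)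
    linarith
  -- degenerate case I = 0
  rcases eq_or_lt_of_le hI0 with hI | hI
  · have hz : (fun x => max (r - |x|) 0 ^ 2 * |v x| ^ ((4:ℝ) / 3)) =ᵐ[μ] 0 :=
      (integral_eq_zero_iff_of_nonneg
        (fun x => mul_nonneg (sq_nonneg _) (Real.rpow_nonneg (abs_nonneg _) _)) hintI).mp hI.symm
    have hA : A = 0 := by
      rw [hAdef]
      have hz2 : (fun x => |v x| ^ ((4:ℝ) / 3)) =ᵐ[μ] 0 := by
        rw [hμdef] at hz ⊢
        filter_upwards [hz, ae_restrict_mem measurableSet_Ioo] with x hx hmem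
        simp only [Pi.zero_apply] at hx ⊢
        have habs : |x| < r := abs_lt.mpr ⟨hmem.1, hmem.2⟩
        have hpos : 0 < max (r - |x|) 0 := lt_max_iff.mpr (Or.inl (by linarith))
        exact (mul_eq_zero.mp hx).resolve_left (ne_of_gt (pow_pos hpos 2))
      rw [integral_congr_ae hz2]; simp
    rw [hA, Real.zero_rpow (by norm_num)]
    exact mul_nonneg (mul_nonneg (by norm_num)
      (Real.rpow_nonneg (Real.rpow_nonneg hB0 _) _)) (Real.rpow_nonneg hI0 _)
  -- main case: I > 0, hence B > 0
  have hBpos : 0 < B := by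
    rcases eq_or_lt_of_le hB0 with h | h
    · exfalso
      have hz2 : (fun x => v x ^ 2) =ᵐ[μ] 0 :=
        (integral_eq_zero_iff_of_nonneg (fun x => sq_nonneg _) hint2).mp h.symm
      have hz3 : (fun x => max (r - |x|) 0 ^ 2 * |v x| ^ ((4:ℝ) / 3)) =ᵐ[μ] 0 := by
        filter_upwards [hz2] with x hx
        simp only [Pi.zero_apply] at hx ⊢
        have hv0 : v x = 0 := by
          have := sq_nonneg (v x); nlinarith
        simp [hv0, Real.zero_rpow (by norm_num : ((4:ℝ) / 3) ≠ 0)]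
      have : I = 0 := by rw [hIdef, integral_congr_ae hz3]; simp
      linarith
    · exact h
  set δ := (I / B ^ ((2:ℝ) / 3)) ^ ((3:ℝ) / 7) with hδdef
  have hBe : 0 < B ^ ((2:ℝ) / 3) := Real.rpow_pos_of_pos hBpos _
  have hδpos : 0 < δ := Real.rpow_pos_of_pos (div_pos hI hBe) _
  have hδ_eq : δ = I ^ ((3:ℝ) / 7) / B ^ ((2:ℝ) / 7) := by
    rw [hδdef, Real.div_rpow hI0 hBe.le, ← Real.rpow_mul hB0]
    norm_num
  have e2 : (δ ^ 2)⁻¹ * I = B ^ ((4:ℝ) / 7) * I ^ ((1:ℝ) / 7) := by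
    have h1 : δ ^ 2 = I ^ ((6:ℝ) / 7) / B ^ ((4:ℝ) / 7) := by
      rw [hδ_eq, div_pow, ← Real.rpow_natCast (I ^ ((3:ℝ) / 7)) 2,
        ← Real.rpow_natCast (B ^ ((2:ℝ) / 7)) 2, ← Real.rpow_mul hI0, ← Real.rpow_mul hB0]
      norm_num
    rw [h1, inv_div, div_mul_eq_mul_div,
      div_eq_iff (ne_of_gt (Real.rpow_pos_of_pos hI _)), mul_assoc,
      ← Real.rpow_add hI]
    norm_num [Real.rpow_one]
  have e1' : B ^ ((2:ℝ) / 3) * δ ^ ((1:ℝ) / 3) = B ^ ((4:ℝ) / 7) * I ^ ((1:ℝ) / 7) := by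
    rw [hδ_eq, Real.div_rpow (Real.rpow_nonneg hI0 _) (Real.rpow_nonneg hB0 _),
      ← Real.rpow_mul hI0, ← Real.rpow_mul hB0,
      show ((3:ℝ) / 7 * (1 / 3)) = (1:ℝ) / 7 by norm_num,
      show ((2:ℝ) / 7 * (1 / 3)) = (2:ℝ) / 21 by norm_num,
      mul_div_assoc', div_eq_iff (ne_of_gt (Real.rpow_pos_of_pos hBpos _)),
      mul_right_comm, ← Real.rpow_add hBpos]
    norm_num
  have e1 : B ^ ((2:ℝ) / 3) * (2 * δ) ^ ((1:ℝ) / 3)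
      ≤ 2 * (B ^ ((4:ℝ) / 7) * I ^ ((1:ℝ) / 7)) := by
    rw [Real.mul_rpow (by norm_num) hδpos.le]
    calc B ^ ((2:ℝ) / 3) * ((2:ℝ) ^ ((1:ℝ) / 3) * δ ^ ((1:ℝ) / 3))
        ≤ B ^ ((2:ℝ) / 3) * (2 * δ ^ ((1:ℝ) / 3)) := by
          apply mul_le_mul_of_nonneg_left _ hBe.le
          apply mul_le_mul_of_nonneg_right _ (Real.rpow_nonneg hδpos.le _)
          calc (2:ℝ) ^ ((1:ℝ) / 3) ≤ (2:ℝ) ^ (1:ℝ) :=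
                Real.rpow_le_rpow_of_exponent_le one_le_two (by norm_num)
            _ = 2 := Real.rpow_one 2
      _ = 2 * (B ^ ((2:ℝ) / 3) * δ ^ ((1:ℝ) / 3)) := by ring
      _ = 2 * (B ^ ((4:ℝ) / 7) * I ^ ((1:ℝ) / 7)) := by rw [e1']
  have hA3 : A ≤ 3 * (B ^ ((4:ℝ) / 7) * I ^ ((1:ℝ) / 7)) := by
    have hk := key δ hδpos
    linarith
  have hX0 : (0:ℝ) ≤ B ^ ((4:ℝ) / 7) * I ^ ((1:ℝ) / 7) :=
    mul_nonneg (Real.rpow_nonneg hB0 _) (Real.rpow_nonneg hI0 _)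
  calc A ^ ((3:ℝ) / 4)
      ≤ (3 * (B ^ ((4:ℝ) / 7) * I ^ ((1:ℝ) / 7))) ^ ((3:ℝ) / 4) :=
        Real.rpow_le_rpow hA0 hA3 (by norm_num)
    _ = 3 ^ ((3:ℝ) / 4) * (B ^ ((3:ℝ) / 7) * I ^ ((3:ℝ) / 28)) := by
        rw [Real.mul_rpow (by norm_num) hX0,
          Real.mul_rpow (Real.rpow_nonneg hB0 _) (Real.rpow_nonneg hI0 _),
          ← Real.rpow_mul hB0, ← Real.rpow_mul hI0]
        norm_num
    _ ≤ 4 * (B ^ ((1:ℝ) / 2)) ^ ((6:ℝ) / 7) * I ^ ((3:ℝ) / 28) := by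
        rw [← Real.rpow_mul hB0, show ((1:ℝ) / 2 * (6 / 7)) = (3:ℝ) / 7 by norm_num]
        have h34 : (3:ℝ) ^ ((3:ℝ) / 4) ≤ 4 := by
          calc (3:ℝ) ^ ((3:ℝ) / 4) ≤ (3:ℝ) ^ (1:ℝ) :=
                Real.rpow_le_rpow_of_exponent_le (by norm_num) (by norm_num)
            _ ≤ 4 := by rw [Real.rpow_one]; norm_num
        have hb : (0:ℝ) ≤ B ^ ((3:ℝ) / 7) := Real.rpow_nonneg hB0 _
        have hi : (0:ℝ) ≤ I ^ ((3:ℝ) / 28) := Real.rpow_nonneg hI0 _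
        nlinarith [mul_nonneg hb hi]

end
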